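/- arXiv:2512.15664 — 3 statements merged into one kernel-verified Lean document; each statement's English description precedes it below -/
import Mathlib

section
/- For every real v > 0, one has the identity ∫₀^v ρ · sinh(ρ) · (sinh²(v/2) − sinh²(ρ/2))^{−1/2} dρ = 4 ∫₀^v (sinh²(v/2) − sinh²(ρ/2))^{1/2} dρ. -/
open MeasureTheory

/-- For every real `v > 0`,
`∫₀^v ρ sinh ρ (sinh²(v/2) − sinh²(ρ/2))^{−1/2} dρ = 4 ∫₀^v (sinh²(v/2) − sinh²(ρ/2))^{1/2} dρ`. -/
theorem stmt1 (v : ℝ) (hv : 0 < v) :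
    (∫ ρ in Set.Ioo (0:ℝ) v,
        ρ * Real.sinh ρ * (Real.sqrt (Real.sinh (v / 2) ^ 2 - Real.sinh (ρ / 2) ^ 2))⁻¹) =
      4 * ∫ ρ in Set.Ioo (0:ℝ) v, Real.sqrt (Real.sinh (v / 2) ^ 2 - Real.sinh (ρ / 2) ^ 2) := by
  set F : ℝ → ℝ := fun ρ => Real.sqrt (Real.sinh (v / 2) ^ 2 - Real.sinh (ρ / 2) ^ 2) with hF
  set A : ℝ → ℝ := fun ρ => ρ * Real.sinh ρ * (F ρ)⁻¹ with hA
  have contF : Continuous F := by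
    apply Real.continuous_sqrt.comp
    fun_prop
  have hpos : ∀ ρ ∈ Set.Ioo (0:ℝ) v, 0 < Real.sinh (v / 2) ^ 2 - Real.sinh (ρ / 2) ^ 2 := by
    intro ρ hρ
    have h1 : Real.sinh (ρ / 2) < Real.sinh (v / 2) :=
      Real.sinh_lt_sinh.2 (by linarith [hρ.2])
    have h0 : 0 ≤ Real.sinh (ρ / 2) := Real.sinh_nonneg_iff.2 (by linarith [hρ.1])
    nlinarith
  have hFpos : ∀ ρ ∈ Set.Ioo (0:ℝ) v, 0 < F ρ := fun ρ hρ => Real.sqrt_pos.2 (hpos ρ hρ)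
  have hderivF : ∀ ρ ∈ Set.Ioo (0:ℝ) v,
      HasDerivAt F (-Real.sinh ρ / (4 * F ρ)) ρ := by
    intro ρ hρ
    have hin : HasDerivAt (fun ρ => Real.sinh (v / 2) ^ 2 - Real.sinh (ρ / 2) ^ 2)
        (-(Real.sinh ρ / 2)) ρ := by
      have h1 : HasDerivAt (fun ρ : ℝ => ρ / 2) (1 / 2) ρ := by
        simpa using (hasDerivAt_id ρ).div_const 2
      have h2 : HasDerivAt (fun ρ : ℝ => Real.sinh (ρ / 2)) (Real.cosh (ρ / 2) * (1 / 2)) ρ :=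
        by have := (Real.hasDerivAt_sinh (ρ / 2)).comp ρ h1; exact this
      have h3 : HasDerivAt (fun ρ : ℝ => Real.sinh (ρ / 2) ^ 2)
          (2 * Real.sinh (ρ / 2) * (Real.cosh (ρ / 2) * (1 / 2))) ρ := by
        simpa using h2.fun_pow 2
      have h4 := (hasDerivAt_const ρ (Real.sinh (v / 2) ^ 2)).fun_sub h3
      refine h4.congr_deriv ?_
      have : Real.sinh ρ = 2 * Real.sinh (ρ / 2) * Real.cosh (ρ / 2) := by
        rw [show ρ = 2 * (ρ / 2) by ring, Real.sinh_two_mul]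
        ring_nf
      rw [this]; ring
    have hne : Real.sinh (v / 2) ^ 2 - Real.sinh (ρ / 2) ^ 2 ≠ 0 := (hpos ρ hρ).ne'
    have := hin.sqrt hne
    convert this using 1
    rw [hF]
    ring
  have hAnonneg : ∀ ρ ∈ Set.Ioo (0:ℝ) v, 0 ≤ A ρ := by
    intro ρ hρ
    have h1 : 0 < Real.sinh ρ := Real.sinh_pos_iff.2 hρ.1
    have h2 : 0 < F ρ := hFpos ρ hρ
    have h0 : 0 < ρ := hρ.1
    rw [hA]
    positivity
  have contIntF : Continuous fun ρ => ∫ t in (0:ℝ)..ρ, F t :=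
    intervalIntegral.continuous_primitive (fun a b => contF.intervalIntegrable a b) 0
  set G : ℝ → ℝ := fun ρ => -4 * ρ * F ρ + 4 * ∫ t in (0:ℝ)..ρ, F t with hG
  have contG : Continuous G := by
    apply Continuous.add
    · exact (continuous_const.mul continuous_id).mul contF
    · exact continuous_const.mul contIntF
  have hderivG : ∀ ρ ∈ Set.Ioo (0:ℝ) v, HasDerivAt G (A ρ) ρ := by
    intro ρ hρ
    have hne : F ρ ≠ 0 := (hFpos ρ hρ).ne'
    have h1 : HasDerivAt (fun ρ => -4 * ρ * F ρ)
        (-4 * F ρ + (-4 * ρ) * (-Real.sinh ρ / (4 * F ρ))) ρ := by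
      have := ((hasDerivAt_id ρ).const_mul (-4:ℝ)).fun_mul (hderivF ρ hρ)
      refine this.congr_deriv ?_
      simp only [id_eq]
      ring
    have h2 : HasDerivAt (fun ρ => ∫ t in (0:ℝ)..ρ, F t) (F ρ) ρ :=
      intervalIntegral.integral_hasDerivAt_right (contF.intervalIntegrable 0 ρ)
        contF.aestronglyMeasurable.stronglyMeasurableAtFilter contF.continuousAt
    have h3 := h1.fun_add (h2.const_mul 4)
    refine h3.congr_deriv ?_
    rw [hA]
    field_simp
    ring
  have intA' : IntervalIntegrable A volume 0 v := by
    apply intervalIntegral.intervalIntegrable_deriv_of_nonneg contG.continuousOn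
    · intro x hx
      rw [min_eq_left hv.le, max_eq_right hv.le] at hx
      exact hderivG x hx
    · intro x hx
      rw [min_eq_left hv.le, max_eq_right hv.le] at hx
      exact hAnonneg x hx
  have intB : IntervalIntegrable (fun ρ => 4 * F ρ) volume 0 v :=
    (continuous_const.mul contF).intervalIntegrable 0 v
  have hderivg : ∀ ρ ∈ Set.Ioo (0:ℝ) v,
      HasDerivAt (fun ρ => -4 * ρ * F ρ) (A ρ - 4 * F ρ) ρ := by
    intro ρ hρ
    have hne : F ρ ≠ 0 := (hFpos ρ hρ).ne'
    have := ((hasDerivAt_id ρ).const_mul (-4:ℝ)).fun_mul (hderivF ρ hρ)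
    refine this.congr_deriv ?_
    simp only [id_eq]
    rw [hA]
    field_simp
    ring
  have hint : IntervalIntegrable (fun ρ => A ρ - 4 * F ρ) volume 0 v := intA'.sub intB
  have hftc := intervalIntegral.integral_eq_sub_of_hasDerivAt_of_le hv.le
    ((continuous_const.mul continuous_id).mul contF).continuousOn hderivg hint
  have hFv : F v = 0 := by
    rw [hF]
    simp
  have hftc0 : (∫ ρ in (0:ℝ)..v, (A ρ - 4 * F ρ)) = 0 := by
    rw [hftc]; simp [hFv]
  have hsplit : (∫ ρ in (0:ℝ)..v, A ρ) = ∫ ρ in (0:ℝ)..v, 4 * F ρ := by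
    have := intervalIntegral.integral_sub intA' intB
    rw [hftc0] at this
    linarith
  have e1 : (∫ ρ in Set.Ioo (0:ℝ) v,
      ρ * Real.sinh ρ * (Real.sqrt (Real.sinh (v / 2) ^ 2 - Real.sinh (ρ / 2) ^ 2))⁻¹)
      = ∫ ρ in (0:ℝ)..v, A ρ := by
    rw [intervalIntegral.integral_of_le hv.le, MeasureTheory.integral_Ioc_eq_integral_Ioo]
  have e2 : (∫ ρ in Set.Ioo (0:ℝ) v,
      Real.sqrt (Real.sinh (v / 2) ^ 2 - Real.sinh (ρ / 2) ^ 2))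
      = ∫ ρ in (0:ℝ)..v, F ρ := by
    rw [intervalIntegral.integral_of_le hv.le, MeasureTheory.integral_Ioc_eq_integral_Ioo]
  rw [e1, e2, hsplit, intervalIntegral.integral_const_mul]
end

section
/- For T ≥ 1 define k_T : (0,∞) → [0,∞] by k_T(u) := (T³ e^{−1/(8T²)} / (4 √2 π^{3/2})) · ∫_{2 arsinh(√u)}^{∞} v e^{−T² v²/2} (sinh²(v/2) − u)^{−1/2} dv. Then k_T(u) ≥ 0 for all u > 0, and there exists a constant C > 0 such that for all T ≥ 1, ∫₀^∞ k_T(u) · arsinh(√u) du ≤ C / T. -/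
open MeasureTheory
open scoped ENNReal

/-- The inverse Selberg–Harish-Chandra transform of the Gaussian test function
`h(t) = e^{−(t² + 1/4)/(2T²)}`, written as an explicit integral:
`k_T(u) = (T³ e^{−1/(8T²)} / (4 √2 π^{3/2})) ∫_{2 arsinh √u}^∞ v e^{−T²v²/2} (sinh²(v/2) − u)^{−1/2} dv`. -/
noncomputable def kT (T u : ℝ) : ℝ≥0∞ :=
  ENNReal.ofReal
      (T ^ 3 * Real.exp (-(1 / (8 * T ^ 2))) / (4 * Real.sqrt 2 * Real.pi ^ ((3:ℝ) / 2))) *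
    ∫⁻ v in Set.Ioi (2 * Real.arsinh (Real.sqrt u)),
      ENNReal.ofReal
        (v * Real.exp (-(T ^ 2 * v ^ 2 / 2)) * (Real.sqrt (Real.sinh (v / 2) ^ 2 - u))⁻¹)

section Aux
open Real Set

lemma aux_sqrt_inv_lintegral {s : ℝ} (hs : 0 < s) :
    ∫⁻ u in Set.Ioo 0 s, ENNReal.ofReal ((Real.sqrt (s - u))⁻¹) =
      ENNReal.ofReal (2 * Real.sqrt s) := by
  have hint : IntervalIntegrable (fun u => (s - u) ^ (-(1/2) : ℝ)) volume 0 s := by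
    have h := intervalIntegral.intervalIntegrable_rpow' (a := 0) (b := s) (r := -(1/2)) (by norm_num)
    simpa using (h.comp_sub_left s).symm
  have hio : MeasureTheory.IntegrableOn (fun u => (s - u) ^ (-(1/2) : ℝ)) (Set.Ioo 0 s) := by
    rwa [intervalIntegrable_iff_integrableOn_Ioo_of_le hs.le] at hint
  have h1 : ∫⁻ u in Set.Ioo 0 s, ENNReal.ofReal ((Real.sqrt (s - u))⁻¹) =
      ∫⁻ u in Set.Ioo 0 s, ENNReal.ofReal ((s - u) ^ (-(1/2) : ℝ)) := by
    refine setLIntegral_congr_fun measurableSet_Ioo (fun u hu => ?_)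
    rw [Real.rpow_neg (by linarith [hu.2] : (0:ℝ) ≤ s - u), Real.sqrt_eq_rpow]
  rw [h1, ← MeasureTheory.ofReal_integral_eq_lintegral_ofReal hio ?_]
  · congr 1
    rw [← MeasureTheory.integral_Ioc_eq_integral_Ioo, ← intervalIntegral.integral_of_le hs.le]
    have h2 := intervalIntegral.integral_comp_sub_left (a := 0) (b := s)
      (fun x => x ^ (-(1/2):ℝ)) s
    simp only [sub_self, sub_zero] at h2
    rw [h2, integral_rpow (Or.inl (by norm_num))]
    rw [Real.zero_rpow (by norm_num), Real.sqrt_eq_rpow]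
    norm_num
    ring
  · filter_upwards [ae_restrict_mem measurableSet_Ioo] with u hu
    exact Real.rpow_nonneg (by linarith [hu.2]) _

noncomputable def Jc : ℝ := ∫ x in Set.Ioi (0:ℝ), x ^ (3:ℝ) * Real.exp (-(1/4) * x ^ 2)

lemma Jc_nonneg : 0 ≤ Jc :=
  setIntegral_nonneg measurableSet_Ioi fun x hx =>
    mul_nonneg (Real.rpow_nonneg (le_of_lt hx) _) (Real.exp_nonneg _)

lemma aux_cubic {T : ℝ} (hT : 1 ≤ T) :
    ∫⁻ v in Set.Ioi (0:ℝ), ENNReal.ofReal (v ^ 3 * Real.exp (-(T^2/4) * v ^ 2)) =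
      ENNReal.ofReal (Jc / T ^ 4) := by
  have hT0 : (0:ℝ) < T := lt_of_lt_of_le one_pos hT
  have hb : (0:ℝ) < T^2/4 := by positivity
  have hint : MeasureTheory.IntegrableOn
      (fun v : ℝ => v ^ 3 * Real.exp (-(T^2/4) * v ^ 2)) (Set.Ioi 0) := by
    have h := integrableOn_rpow_mul_exp_neg_mul_sq (b := T^2/4) hb (s := 3) (by norm_num)
    refine h.congr_fun (fun x hx => ?_) measurableSet_Ioi
    dsimp only
    rw [show (3:ℝ) = ((3:ℕ):ℝ) by norm_num, Real.rpow_natCast]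
  rw [← MeasureTheory.ofReal_integral_eq_lintegral_ofReal hint ?_]
  · congr 1
    have key : ∀ v ∈ Set.Ioi (0:ℝ), v ^ 3 * Real.exp (-(T^2/4) * v ^ 2) =
        T⁻¹^3 * ((T*v) ^ (3:ℝ) * Real.exp (-(1/4) * (T*v) ^ 2)) := by
      intro v _
      rw [show (3:ℝ) = ((3:ℕ):ℝ) by norm_num, Real.rpow_natCast]
      rw [show -(1/4) * (T*v)^2 = -(T^2/4) * v^2 by ring]
      field_simp
    rw [setIntegral_congr_fun measurableSet_Ioi key, MeasureTheory.integral_const_mul,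
      integral_comp_mul_left_Ioi (fun x => x ^ (3:ℝ) * Real.exp (-(1/4) * x ^ 2)) 0 hT0,
      mul_zero]
    show T⁻¹^3 * (T⁻¹ • Jc) = Jc / T^4
    rw [smul_eq_mul, eq_div_iff (by positivity : (T^4:ℝ) ≠ 0)]
    rw [show (T:ℝ)^4 = T*T^3 by ring]
    field_simp
  · filter_upwards [ae_restrict_mem measurableSet_Ioi] with v hv
    exact mul_nonneg (pow_nonneg (le_of_lt hv) 3) (Real.exp_nonneg _)

end Aux

/-- `k_T(u) ≥ 0` for all `u > 0`, and there is a constant `C > 0` such that for all `T ≥ 1`,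
`∫₀^∞ k_T(u) arsinh(√u) du ≤ C / T`. -/

theorem stmt4 :
    (∀ T : ℝ, 1 ≤ T → ∀ u : ℝ, 0 < u → 0 ≤ kT T u) ∧
      ∃ C > (0:ℝ), ∀ T : ℝ, 1 ≤ T →
        (∫⁻ u in Set.Ioi (0:ℝ), kT T u * ENNReal.ofReal (Real.arsinh (Real.sqrt u))) ≤
          ENNReal.ofReal (C / T) := by
  have hD0 : (0:ℝ) < 4 * Real.sqrt 2 * Real.pi ^ ((3:ℝ) / 2) := by
    have := Real.pi_pos
    positivity
  refine ⟨fun T _ u _ => zero_le,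
    Real.exp (1/4) / 2 * (Jc + 1) / (4 * Real.sqrt 2 * Real.pi ^ ((3:ℝ) / 2)),
    by have := Jc_nonneg; positivity, fun T hT => ?_⟩
  have hT0 : (0:ℝ) < T := lt_of_lt_of_le one_pos hT
  have hT2 : (1:ℝ) ≤ T ^ 2 := by nlinarith
  set cT : ℝ := T ^ 3 * Real.exp (-(1 / (8 * T ^ 2))) /
      (4 * Real.sqrt 2 * Real.pi ^ ((3:ℝ) / 2)) with hcT
  have hcT0 : 0 ≤ cT := by positivity
  -- the function on the product space
  set φ : ℝ × ℝ → ℝ≥0∞ := fun p =>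
    Set.indicator {q : ℝ × ℝ | 2 * Real.arsinh (Real.sqrt q.1) < q.2}
      (fun q => ENNReal.ofReal (q.2 / 2 * (q.2 * Real.exp (-(T ^ 2 * q.2 ^ 2 / 2)) *
        (Real.sqrt (Real.sinh (q.2 / 2) ^ 2 - q.1))⁻¹))) p with hφ
  have hsqm : Measurable fun q : ℝ × ℝ =>
      (Real.sqrt (Real.sinh (q.2 / 2) ^ 2 - q.1))⁻¹ := by
    apply Measurable.inv
    fun_prop
  have hφm : Measurable φ := by
    apply Measurable.indicator
    · apply Measurable.ennreal_ofReal
      apply Measurable.mul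
      · fun_prop
      · apply Measurable.mul
        · fun_prop
        · exact hsqm
    · exact measurableSet_lt
        ((continuous_const.mul (Real.continuous_arsinh.comp
          (Real.continuous_sqrt.comp continuous_fst))).measurable) measurable_snd
  -- step 1 : pull out the constant
  have e1 : ∀ u : ℝ, kT T u * ENNReal.ofReal (Real.arsinh (Real.sqrt u)) =
      ENNReal.ofReal cT *
        ((∫⁻ v in Set.Ioi (2 * Real.arsinh (Real.sqrt u)),
          ENNReal.ofReal (v * Real.exp (-(T ^ 2 * v ^ 2 / 2)) *
            (Real.sqrt (Real.sinh (v / 2) ^ 2 - u))⁻¹)) *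
          ENNReal.ofReal (Real.arsinh (Real.sqrt u))) := fun u => by
    rw [kT, mul_assoc]
  -- step 2 : bound the inner integrand for each fixed u > 0
  have key1 : ∀ u ∈ Set.Ioi (0:ℝ),
      (∫⁻ v in Set.Ioi (2 * Real.arsinh (Real.sqrt u)),
          ENNReal.ofReal (v * Real.exp (-(T ^ 2 * v ^ 2 / 2)) *
            (Real.sqrt (Real.sinh (v / 2) ^ 2 - u))⁻¹)) *
          ENNReal.ofReal (Real.arsinh (Real.sqrt u)) ≤ ∫⁻ v, φ (u, v) := by
    intro u hu
    have hau : 0 < Real.arsinh (Real.sqrt u) :=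
      Real.arsinh_pos_iff.2 (Real.sqrt_pos.2 hu)
    calc (∫⁻ v in Set.Ioi (2 * Real.arsinh (Real.sqrt u)),
          ENNReal.ofReal (v * Real.exp (-(T ^ 2 * v ^ 2 / 2)) *
            (Real.sqrt (Real.sinh (v / 2) ^ 2 - u))⁻¹)) *
          ENNReal.ofReal (Real.arsinh (Real.sqrt u))
        = ∫⁻ v in Set.Ioi (2 * Real.arsinh (Real.sqrt u)),
            ENNReal.ofReal (Real.arsinh (Real.sqrt u)) *
            ENNReal.ofReal (v * Real.exp (-(T ^ 2 * v ^ 2 / 2)) *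
              (Real.sqrt (Real.sinh (v / 2) ^ 2 - u))⁻¹) := by
          rw [mul_comm, lintegral_const_mul' _ _ ENNReal.ofReal_ne_top]
      _ ≤ ∫⁻ v in Set.Ioi (2 * Real.arsinh (Real.sqrt u)), φ (u, v) := by
          apply setLIntegral_mono (hφm.comp measurable_prodMk_left)
          intro v hv
          have hv' : 2 * Real.arsinh (Real.sqrt u) < v := hv
          have hv0 : 0 < v := lt_trans (by linarith) hv'
          have hmem : (u, v) ∈ {q : ℝ × ℝ | 2 * Real.arsinh (Real.sqrt q.1) < q.2} := hv'
          simp only [Function.comp_apply, hφ]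
          rw [Set.indicator_of_mem hmem]
          rw [← ENNReal.ofReal_mul (le_of_lt hau)]
          apply ENNReal.ofReal_le_ofReal
          apply mul_le_mul_of_nonneg_right
          · linarith
          · have h1 : 0 ≤ v * Real.exp (-(T ^ 2 * v ^ 2 / 2)) := by positivity
            exact mul_nonneg h1 (inv_nonneg.2 (Real.sqrt_nonneg _))
      _ ≤ ∫⁻ v, φ (u, v) := setLIntegral_le_lintegral _ _
  -- step 3 : evaluate/bound the inner u-integral for each fixed v
  have key2 : ∀ v : ℝ, (∫⁻ u in Set.Ioi (0:ℝ), φ (u, v)) ≤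
      Set.indicator (Set.Ioi (0:ℝ))
        (fun w => ENNReal.ofReal (Real.exp (1/4) / 2 *
          (w ^ 3 * Real.exp (-(T^2/4) * w ^ 2)))) v := by
    intro v
    by_cases hv : 0 < v
    · have hs0 : 0 < Real.sinh (v/2) := Real.sinh_pos_iff.2 (by linarith)
      have hs20 : 0 < Real.sinh (v/2) ^ 2 := by positivity
      have hcv0 : 0 ≤ v/2 * (v * Real.exp (-(T^2*v^2/2))) := by positivity
      rw [Set.indicator_of_mem (Set.mem_Ioi.2 hv)]
      have hstep : (∫⁻ u in Set.Ioi (0:ℝ), φ (u, v)) =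
          ∫⁻ u in Set.Ioo (0:ℝ) (Real.sinh (v/2) ^ 2),
            ENNReal.ofReal (v/2 * (v * Real.exp (-(T^2*v^2/2)))) *
            ENNReal.ofReal ((Real.sqrt (Real.sinh (v/2) ^ 2 - u))⁻¹) := by
        have h1 : (∫⁻ u in Set.Ioi (0:ℝ), φ (u, v)) =
            ∫⁻ u in Set.Ioi (0:ℝ), Set.indicator (Set.Iio (Real.sinh (v/2) ^ 2))
              (fun u => ENNReal.ofReal (v/2 * (v * Real.exp (-(T^2*v^2/2)))) *
                ENNReal.ofReal ((Real.sqrt (Real.sinh (v/2) ^ 2 - u))⁻¹)) u := by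
          refine setLIntegral_congr_fun measurableSet_Ioi (fun u hu => ?_)
          have hiff : 2 * Real.arsinh (Real.sqrt u) < v ↔ u < Real.sinh (v/2) ^ 2 := by
            rw [show (2 * Real.arsinh (Real.sqrt u) < v) ↔
                (Real.arsinh (Real.sqrt u) < v/2) from ⟨fun h => by linarith,
                  fun h => by linarith⟩,
              ← Real.sinh_lt_sinh, Real.sinh_arsinh,
              Real.sqrt_lt' hs0]
          by_cases h : u ∈ Set.Iio (Real.sinh (v/2) ^ 2)
          · simp only [hφ]
            rw [Set.indicator_of_mem
                (show (u, v) ∈ {q : ℝ × ℝ | 2 * Real.arsinh (Real.sqrt q.1) < q.2}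
                  from hiff.2 h),
              Set.indicator_of_mem h, ← ENNReal.ofReal_mul hcv0]
            congr 1
            ring
          · simp only [hφ]
            rw [Set.indicator_of_notMem
                (show (u, v) ∉ {q : ℝ × ℝ | 2 * Real.arsinh (Real.sqrt q.1) < q.2}
                  from fun hc => h (hiff.1 hc)),
              Set.indicator_of_notMem h]
        rw [h1, lintegral_indicator measurableSet_Iio,
          Measure.restrict_restrict measurableSet_Iio,
          show Set.Iio (Real.sinh (v/2) ^ 2) ∩ Set.Ioi (0:ℝ) =
              Set.Ioo 0 (Real.sinh (v/2) ^ 2) by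
            rw [Set.inter_comm, Set.Ioi_inter_Iio]]
      rw [hstep, lintegral_const_mul' _ _ ENNReal.ofReal_ne_top,
        aux_sqrt_inv_lintegral hs20, ← ENNReal.ofReal_mul hcv0, Real.sqrt_sq hs0.le]
      apply ENNReal.ofReal_le_ofReal
      have h2 : Real.sinh (v/2) ≤ v/2 * Real.exp (v/2) := by
        have e2 : Real.exp (-(v/2)) = Real.exp (-v) * Real.exp (v/2) := by
          rw [← Real.exp_add]; ring_nf
        rw [Real.sinh_eq, e2]
        nlinarith [Real.exp_pos (v/2), Real.add_one_le_exp (-v)]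
      have h3 : Real.exp (-(T^2*v^2/2)) * Real.exp (v/2) ≤
          Real.exp (1/4) * Real.exp (-(T^2/4) * v^2) := by
        rw [← Real.exp_add, ← Real.exp_add]
        apply Real.exp_le_exp.2
        nlinarith [sq_nonneg (v - 1), mul_nonneg (sub_nonneg.2 hT2) (sq_nonneg v)]
      calc v/2 * (v * Real.exp (-(T^2*v^2/2))) * (2 * Real.sinh (v/2))
          = v^2 * (Real.exp (-(T^2*v^2/2)) * Real.sinh (v/2)) := by ring
        _ ≤ v^2 * (Real.exp (-(T^2*v^2/2)) * (v/2 * Real.exp (v/2))) := by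
            exact mul_le_mul_of_nonneg_left
              (mul_le_mul_of_nonneg_left h2 (Real.exp_nonneg _)) (sq_nonneg v)
        _ = v^3/2 * (Real.exp (-(T^2*v^2/2)) * Real.exp (v/2)) := by ring
        _ ≤ v^3/2 * (Real.exp (1/4) * Real.exp (-(T^2/4) * v^2)) := by
            exact mul_le_mul_of_nonneg_left h3 (by positivity)
        _ = Real.exp (1/4) / 2 * (v^3 * Real.exp (-(T^2/4) * v^2)) := by ring
    · have hz : (∫⁻ u in Set.Ioi (0:ℝ), φ (u, v)) = 0 := by
        have hz0 : ∀ u ∈ Set.Ioi (0:ℝ), φ (u, v) = (0:ℝ≥0∞) := by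
          intro u hu
          simp only [hφ]
          apply Set.indicator_of_notMem
          intro hc
          have h1 : 0 ≤ Real.arsinh (Real.sqrt u) :=
            Real.arsinh_nonneg_iff.2 (Real.sqrt_nonneg u)
          have h2 : 2 * Real.arsinh (Real.sqrt u) < v := hc
          have h3 : v ≤ 0 := not_lt.1 hv
          linarith
        rw [setLIntegral_congr_fun measurableSet_Ioi hz0, lintegral_zero]
      rw [hz]
      exact zero_le
  -- assemble everything
  have hexple : Real.exp (-(1/(8*T^2))) ≤ 1 := by
    rw [← Real.exp_zero]
    exact Real.exp_le_exp.2 (neg_nonpos.2 (by positivity))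
  calc ∫⁻ u in Set.Ioi (0:ℝ), kT T u * ENNReal.ofReal (Real.arsinh (Real.sqrt u))
      = ENNReal.ofReal cT * ∫⁻ u in Set.Ioi (0:ℝ),
          ((∫⁻ v in Set.Ioi (2 * Real.arsinh (Real.sqrt u)),
            ENNReal.ofReal (v * Real.exp (-(T ^ 2 * v ^ 2 / 2)) *
              (Real.sqrt (Real.sinh (v / 2) ^ 2 - u))⁻¹)) *
            ENNReal.ofReal (Real.arsinh (Real.sqrt u))) := by
        simp_rw [e1]
        rw [lintegral_const_mul' _ _ ENNReal.ofReal_ne_top]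
    _ ≤ ENNReal.ofReal cT * ∫⁻ u in Set.Ioi (0:ℝ), ∫⁻ v, φ (u, v) :=
        mul_le_mul_right (setLIntegral_mono hφm.lintegral_prod_right' key1) _
    _ = ENNReal.ofReal cT * ∫⁻ v, ∫⁻ u in Set.Ioi (0:ℝ), φ (u, v) := by
        rw [lintegral_lintegral_swap hφm.aemeasurable]
    _ ≤ ENNReal.ofReal cT * ∫⁻ v, Set.indicator (Set.Ioi (0:ℝ))
          (fun w => ENNReal.ofReal (Real.exp (1/4) / 2 *
            (w ^ 3 * Real.exp (-(T^2/4) * w ^ 2)))) v :=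
        mul_le_mul_right (lintegral_mono key2) _
    _ = ENNReal.ofReal cT * (ENNReal.ofReal (Real.exp (1/4) / 2) *
          ENNReal.ofReal (Jc / T ^ 4)) := by
        rw [lintegral_indicator measurableSet_Ioi]
        simp_rw [ENNReal.ofReal_mul (by positivity : (0:ℝ) ≤ Real.exp (1/4) / 2)]
        rw [lintegral_const_mul' _ _ ENNReal.ofReal_ne_top, aux_cubic hT]
    _ ≤ ENNReal.ofReal (Real.exp (1/4) / 2 * (Jc + 1) /
          (4 * Real.sqrt 2 * Real.pi ^ ((3:ℝ) / 2)) / T) := by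
        rw [← ENNReal.ofReal_mul (by positivity : (0:ℝ) ≤ Real.exp (1/4) / 2),
          ← ENNReal.ofReal_mul hcT0]
        apply ENNReal.ofReal_le_ofReal
        have key : cT * (Real.exp (1/4) / 2 * (Jc / T ^ 4)) =
            (Real.exp (-(1/(8*T^2))) * (Real.exp (1/4) / 2) * Jc /
              (4 * Real.sqrt 2 * Real.pi ^ ((3:ℝ) / 2))) * (1/T) := by
          rw [hcT]
          field_simp
        rw [key, show Real.exp (1/4) / 2 * (Jc + 1) /
            (4 * Real.sqrt 2 * Real.pi ^ ((3:ℝ) / 2)) / T =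
            (Real.exp (1/4) / 2 * (Jc + 1) /
              (4 * Real.sqrt 2 * Real.pi ^ ((3:ℝ) / 2))) * (1/T) by ring]
        apply mul_le_mul_of_nonneg_right _ (by positivity)
        rw [div_le_div_iff₀ hD0 hD0]
        have hnum : Real.exp (-(1/(8*T^2))) * (Real.exp (1/4) / 2) * Jc ≤
            Real.exp (1/4) / 2 * (Jc + 1) := by
          nlinarith [Jc_nonneg, hexple, Real.exp_pos ((1:ℝ)/4),
            mul_nonneg (mul_nonneg (sub_nonneg.2 hexple)
              (by positivity : (0:ℝ) ≤ Real.exp (1/4) / 2)) Jc_nonneg]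
        exact mul_le_mul_of_nonneg_right hnum hD0.le
end

section
/- There exists a constant C > 0 such that for all real t, |Γ(1/4 + it/2)|⁴ / |Γ(1/2 + it)|² ≤ C / (1 + |t|), where Γ denotes the complex Gamma function. -/
open Complex Real MeasureTheory Set intervalIntegral

noncomputable section

lemma norm_f {τ x : ℝ} (hx : 0 < x) (hx1 : x ≤ 1) :
    ‖(x:ℂ) ^ ((1/4 + τ*Complex.I) - 1) * (1 - (x:ℂ)) ^ ((1/2:ℂ) - 1)‖
      = x ^ (-(3/4):ℝ) * (1-x) ^ (-(1/2):ℝ) := by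
  have h1 : ((1/4 + τ*Complex.I) - 1 : ℂ).re = -(3/4) := by simp; norm_num
  have h2 : ((1/2:ℂ) - 1).re = -(1/2) := by norm_num
  have hc : (1 - (x:ℂ)) = ((1 - x : ℝ) : ℂ) := by push_cast; ring
  rcases eq_or_lt_of_le hx1 with rfl | hx1
  · simp [Complex.zero_cpow (show ((1/2:ℂ) - 1) ≠ 0 by norm_num),
      Real.zero_rpow (show (-(1/2):ℝ) ≠ 0 by norm_num)]
    norm_num
  · rw [norm_mul, Complex.norm_cpow_eq_rpow_re_of_pos hx, hc,
      Complex.norm_cpow_eq_rpow_re_of_pos (by linarith), h1, h2]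

lemma rpow_neg_le_two {b r : ℝ} (hb : 1/2 ≤ b) (hr : 0 ≤ r) (hr1 : r ≤ 1) : b ^ (-r) ≤ 2 := by
  have h1 : b ^ (-r) ≤ (1/2 : ℝ) ^ (-r) :=
    Real.rpow_le_rpow_of_nonpos (by norm_num) hb (by linarith)
  have h2 : ((1/2 : ℝ)) ^ (-r) = 2 ^ r := by
    rw [show (1/2:ℝ) = 2⁻¹ by norm_num, Real.inv_rpow (by norm_num), ← Real.rpow_neg (by norm_num),
      neg_neg]
  have h3 : (2:ℝ) ^ r ≤ 2 ^ (1:ℝ) := Real.rpow_le_rpow_of_exponent_le (by norm_num) hr1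
  rw [Real.rpow_one] at h3
  linarith [h1, h2 ▸ h1]

lemma beta_integrable (τ : ℝ) :
    IntervalIntegrable (fun x : ℝ => (x:ℂ) ^ ((1/4 + τ*Complex.I) - 1) * (1 - (x:ℂ)) ^ ((1/2:ℂ) - 1))
      volume 0 1 :=
  Complex.betaIntegral_convergent (by simp) (by norm_num)

lemma int_rpow34 : ∫ x in (0:ℝ)..1, x ^ (-(3/4):ℝ) = 4 := by
  rw [integral_rpow (Or.inl (by norm_num))]
  norm_num

lemma int_rpow12 : ∫ x in (0:ℝ)..1, (1-x) ^ (-(1/2):ℝ) = 2 := by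
  rw [intervalIntegral.integral_comp_sub_left (fun x : ℝ => x ^ (-(1/2):ℝ)) 1]
  norm_num
  rw [integral_rpow (Or.inl (by norm_num))]
  norm_num

lemma Kbound_triv (τ : ℝ) :
    ‖Complex.betaIntegral (1/4 + τ*Complex.I) (1/2)‖ ≤ 12 := by
  have hint1 : IntervalIntegrable (fun x : ℝ => 2 * x ^ (-(3/4):ℝ)) volume 0 1 :=
    (intervalIntegrable_rpow' (by norm_num)).const_mul 2
  have hint2 : IntervalIntegrable (fun x : ℝ => 2 * (1-x) ^ (-(1/2):ℝ)) volume 0 1 := by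
    have := ((intervalIntegrable_rpow' (a := 0) (b := 1) (r := -(1/2)) (by norm_num)).comp_sub_left 1).const_mul 2
    simpa using this.symm
  have h : ‖∫ x in (0:ℝ)..1, (x:ℂ) ^ ((1/4 + τ*Complex.I) - 1) * (1 - (x:ℂ)) ^ ((1/2:ℂ) - 1)‖
      ≤ |∫ x in (0:ℝ)..1, (2 * x ^ (-(3/4):ℝ) + 2 * (1-x) ^ (-(1/2):ℝ))| := by
    apply intervalIntegral.norm_integral_le_abs_of_norm_le _ (hint1.add hint2)
    rw [ae_restrict_iff' measurableSet_uIoc]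
    refine Filter.Eventually.of_forall (fun x hx => ?_)
    rw [uIoc_of_le (by norm_num : (0:ℝ) ≤ 1)] at hx
    rw [norm_f hx.1 hx.2]
    have h1 : (0:ℝ) ≤ x ^ (-(3/4):ℝ) := Real.rpow_nonneg hx.1.le _
    have h2 : (0:ℝ) ≤ (1-x) ^ (-(1/2):ℝ) := Real.rpow_nonneg (by linarith [hx.2]) _
    rcases le_total x (1/2) with h | h
    · have hb : (1-x) ^ (-(1/2):ℝ) ≤ 2 := by
        rw [show (-(1/2):ℝ) = -(1/2) from rfl]
        exact rpow_neg_le_two (by linarith) (by norm_num) (by norm_num)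
      nlinarith [mul_le_mul_of_nonneg_left hb h1]
    · have hb : x ^ (-(3/4):ℝ) ≤ 2 := rpow_neg_le_two h (by norm_num) (by norm_num)
      nlinarith [mul_le_mul_of_nonneg_right hb h2]
  have hval : ∫ x in (0:ℝ)..1, (2 * x ^ (-(3/4):ℝ) + 2 * (1-x) ^ (-(1/2):ℝ)) = 12 := by
    rw [intervalIntegral.integral_add hint1 hint2, intervalIntegral.integral_const_mul,
      intervalIntegral.integral_const_mul, int_rpow34, int_rpow12]
    norm_num
  calc ‖Complex.betaIntegral (1/4 + τ*Complex.I) (1/2)‖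
      = ‖∫ x in (0:ℝ)..1, (x:ℂ) ^ ((1/4 + τ*Complex.I) - 1) * (1 - (x:ℂ)) ^ ((1/2:ℂ) - 1)‖ := rfl
    _ ≤ _ := h
    _ ≤ 12 := by rw [hval]; norm_num
set_option maxHeartbeats 1600000 in
lemma Kbound_large {τ : ℝ} (hτ : 2 ≤ |τ|) :
    ‖Complex.betaIntegral (1/4 + τ*Complex.I) (1/2)‖ ≤ 16 * |τ| ^ (-(1/2):ℝ) := by
  set T := |τ| with hTdef
  clear_value T
  have hT0 : (0:ℝ) < T := lt_of_lt_of_le two_pos hτ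
  have hT1 : (1:ℝ) ≤ T := by linarith
  set f : ℝ → ℂ := fun x => (x:ℂ) ^ ((1/4 + τ*Complex.I) - 1) * (1 - (x:ℂ)) ^ ((1/2:ℂ) - 1) with hf
  set c : ℂ := (1/4 + τ*Complex.I) - 1 with hcdef
  set a : ℝ := T ^ (-2:ℝ) with hadef
  set b : ℝ := 1 - T⁻¹ with hbdef
  clear_value a b
  have ha0 : 0 < a := by rw [hadef]; exact Real.rpow_pos_of_pos hT0 _
  have ha4 : a ≤ 1/4 := by
    have h := Real.rpow_le_rpow_of_nonpos two_pos hτ (by norm_num : (-2:ℝ) ≤ 0)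
    have h4 : (2:ℝ) ^ (-2:ℝ) = 1/4 := by
      rw [show (-2:ℝ) = ((-2:ℤ):ℝ) by norm_num, Real.rpow_intCast]; norm_num
    rw [hadef]; linarith [h, h4 ▸ h]
  have hbhalf : 1/2 ≤ b := by
    have : T⁻¹ ≤ 1/2 := by
      rw [inv_le_comm₀ hT0 (by norm_num)]; linarith
    rw [hbdef]; linarith
  have hb1 : b < 1 := by
    have : 0 < T⁻¹ := inv_pos.mpr hT0; rw [hbdef]; linarith
  have hab : a ≤ b := ha4.trans (by linarith)
  have h1b : 1 - b = T⁻¹ := by rw [hbdef]; ring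
  -- rpow facts
  have R6 : 0 < T ^ (-(1/2):ℝ) := Real.rpow_pos_of_pos hT0 _
  have R1 : a ^ ((1/4):ℝ) = T ^ (-(1/2):ℝ) := by
    rw [hadef, ← Real.rpow_mul hT0.le]; norm_num
  have R2 : (1-b) ^ (-(1/2):ℝ) = T ^ ((1/2):ℝ) := by
    rw [h1b, Real.inv_rpow hT0.le, ← Real.rpow_neg hT0.le, neg_neg]
  have R3 : (1-b) ^ ((1/2):ℝ) = T ^ (-(1/2):ℝ) := by
    rw [h1b, Real.inv_rpow hT0.le, ← Real.rpow_neg hT0.le]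
  have R4 : T⁻¹ ≤ T ^ (-(1/2):ℝ) := by
    rw [← Real.rpow_neg_one T]
    exact Real.rpow_le_rpow_of_exponent_le hT1 (by norm_num)
  have R5 : T ^ ((1/2):ℝ) * T⁻¹ = T ^ (-(1/2):ℝ) := by
    rw [← Real.rpow_neg_one T, ← Real.rpow_add hT0]; norm_num
  -- subinterval integrability
  have hsub : ∀ {p q : ℝ}, 0 ≤ p → p ≤ q → q ≤ 1 → IntervalIntegrable f volume p q := by
    intro p q hp hpq hq1
    refine (beta_integrable τ).mono_set ?_
    rw [uIcc_of_le hpq, uIcc_of_le (by norm_num : (0:ℝ) ≤ 1)]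
    exact Icc_subset_Icc hp hq1
  have hi1 : IntervalIntegrable f volume 0 a := hsub le_rfl ha0.le (by linarith)
  have hi2 : IntervalIntegrable f volume a b := hsub ha0.le hab (by linarith)
  have hi3 : IntervalIntegrable f volume b 1 := hsub (by linarith) hb1.le le_rfl
  have hsplit : Complex.betaIntegral (1/4 + τ*Complex.I) (1/2)
      = (∫ x in (0:ℝ)..a, f x) + (∫ x in a..b, f x) + (∫ x in b..1, f x) := by
    rw [Complex.betaIntegral, intervalIntegral.integral_add_adjacent_intervals hi1 hi2,
      intervalIntegral.integral_add_adjacent_intervals (hi1.trans hi2) hi3]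
  -- Piece 1
  have P1 : ‖∫ x in (0:ℝ)..a, f x‖ ≤ 8 * T ^ (-(1/2):ℝ) := by
    have hint : IntervalIntegrable (fun x : ℝ => 2 * x ^ (-(3/4):ℝ)) volume 0 a :=
      (intervalIntegrable_rpow' (by norm_num)).const_mul 2
    have h := intervalIntegral.norm_integral_le_abs_of_norm_le (f := f)
      (g := fun x => 2 * x ^ (-(3/4):ℝ)) (a := 0) (b := a) ?_ hint
    · have hval : ∫ x in (0:ℝ)..a, 2 * x ^ (-(3/4):ℝ) = 8 * a ^ ((1/4):ℝ) := by
        rw [intervalIntegral.integral_const_mul, integral_rpow (Or.inl (by norm_num))]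
        rw [Real.zero_rpow (by norm_num)]
        ring_nf
      rw [hval, R1, _root_.abs_of_nonneg (by positivity)] at h
      exact h
    · rw [ae_restrict_iff' measurableSet_uIoc]
      refine Filter.Eventually.of_forall (fun x hx => ?_)
      rw [uIoc_of_le ha0.le] at hx
      rw [hf, norm_f hx.1 (by linarith [hx.2, ha4])]
      have h1 : (0:ℝ) ≤ x ^ (-(3/4):ℝ) := Real.rpow_nonneg hx.1.le _
      have hb2 : (1-x) ^ (-(1/2):ℝ) ≤ 2 :=
        rpow_neg_le_two (by linarith [hx.2, ha4]) (by norm_num) (by norm_num)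
      nlinarith [mul_le_mul_of_nonneg_left hb2 h1]
  -- Piece 3
  have P3 : ‖∫ x in b..(1:ℝ), f x‖ ≤ 4 * T ^ (-(1/2):ℝ) := by
    have hint : IntervalIntegrable (fun x : ℝ => 2 * (1-x) ^ (-(1/2):ℝ)) volume b 1 := by
      have := ((intervalIntegrable_rpow' (a := 1-b) (b := 0) (r := -(1/2))
        (by norm_num)).comp_sub_left 1).const_mul 2
      simpa using this
    have h := intervalIntegral.norm_integral_le_abs_of_norm_le (f := f)
      (g := fun x => 2 * (1-x) ^ (-(1/2):ℝ)) (a := b) (b := 1) ?_ hint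
    · have hval : ∫ x in b..(1:ℝ), 2 * (1-x) ^ (-(1/2):ℝ) = 4 * (1-b) ^ ((1/2):ℝ) := by
        rw [intervalIntegral.integral_const_mul,
          intervalIntegral.integral_comp_sub_left (fun x : ℝ => x ^ (-(1/2):ℝ)) 1]
        rw [show (1:ℝ) - 1 = 0 by ring, integral_rpow (Or.inl (by norm_num))]
        rw [Real.zero_rpow (by norm_num)]
        ring_nf
      rw [hval, R3, _root_.abs_of_nonneg (by positivity)] at h
      exact h
    · rw [ae_restrict_iff' measurableSet_uIoc]
      refine Filter.Eventually.of_forall (fun x hx => ?_)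
      rw [uIoc_of_le (by linarith : b ≤ 1)] at hx
      rw [hf, norm_f (by linarith [hx.1]) hx.2]
      have h2 : (0:ℝ) ≤ (1-x) ^ (-(1/2):ℝ) := Real.rpow_nonneg (by linarith [hx.2]) _
      have hb2 : x ^ (-(3/4):ℝ) ≤ 2 :=
        rpow_neg_le_two (by linarith [hx.1]) (by norm_num) (by norm_num)
      nlinarith [mul_le_mul_of_nonneg_right hb2 h2]
  -- Piece 2 : integration by parts
  have hcne : c ≠ -1 := by
    rw [hcdef]
    intro h
    have := congrArg Complex.re h
    simp at this
  have hc1re : (c+1).re = 1/4 := by rw [hcdef]; simp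
  have habs_s : T ≤ ‖c+1‖ := by
    have h := Complex.abs_im_le_norm (c+1)
    have him : (c+1).im = τ := by rw [hcdef]; simp
    rw [him] at h
    rw [hTdef]
    exact h
  have habs_s0 : 0 < ‖c+1‖ := lt_of_lt_of_le hT0 habs_s
  set u : ℝ → ℂ := fun x => (((1-x) ^ (-(1/2):ℝ) : ℝ) : ℂ) with hu_def
  set u' : ℝ → ℂ := fun x => (((1-x) ^ (-(3/2):ℝ) / 2 : ℝ) : ℂ) with hu'_def
  set v : ℝ → ℂ := fun x => (x:ℂ) ^ (c+1) / (c+1) with hv_def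
  set v' : ℝ → ℂ := fun x => (x:ℂ) ^ c with hv'_def
  have hmem : ∀ x ∈ uIcc a b, a ≤ x ∧ x ≤ b := by
    intro x hx; rw [uIcc_of_le hab] at hx; exact ⟨hx.1, hx.2⟩
  have hu : ∀ x ∈ uIcc a b, HasDerivAt u (u' x) x := by
    intro x hx
    obtain ⟨hx1, hx2⟩ := hmem x hx
    have h1x : 0 < 1 - x := by linarith [h1b ▸ (by positivity : (0:ℝ) < T⁻¹)]
    have hre : HasDerivAt (fun y : ℝ => (1-y) ^ (-(1/2):ℝ)) ((1-x) ^ (-(3/2):ℝ) / 2) x := by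
      have hd := (Real.hasDerivAt_rpow_const (x := 1-x) (p := -(1/2))
        (Or.inl h1x.ne')).comp x ((hasDerivAt_id x).const_sub 1)
      simp only [Function.comp_def, id_eq] at hd
      refine hd.congr_deriv ?_
      rw [show (-(1/2):ℝ) - 1 = -(3/2) by norm_num]
      ring
    exact hre.ofReal_comp
  have hv : ∀ x ∈ uIcc a b, HasDerivAt v (v' x) x := by
    intro x hx
    obtain ⟨hx1, hx2⟩ := hmem x hx
    exact hasDerivAt_ofReal_cpow_const' (by linarith [ha0] : x ≠ 0) hcne
  have hu'int : IntervalIntegrable u' volume a b := by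
    apply ContinuousOn.intervalIntegrable
    apply Complex.continuous_ofReal.comp_continuousOn
    apply ContinuousOn.div_const
    apply ContinuousOn.rpow_const
    · exact continuousOn_const.sub continuousOn_id
    · intro x hx
      obtain ⟨hx1, hx2⟩ := hmem x hx
      left
      have : 0 < T⁻¹ := by positivity
      intro h
      rw [sub_eq_zero] at h
      have hx1' : (1:ℝ) = x := by simpa using h
      linarith
  have hv'int : IntervalIntegrable v' volume a b := by
    apply ContinuousOn.intervalIntegrable
    apply ContinuousOn.cpow
    · exact Complex.continuous_ofReal.continuousOn
    · exact continuousOn_const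
    · intro x hx
      obtain ⟨hx1, hx2⟩ := hmem x hx
      exact Complex.ofReal_mem_slitPlane.2 (by linarith [ha0])
  have heq : ∀ x ∈ uIcc a b, f x = u x * v' x := by
    intro x hx
    obtain ⟨hx1, hx2⟩ := hmem x hx
    have h1x : (0:ℝ) ≤ 1 - x := by linarith
    have : (((1-x) ^ (-(1/2):ℝ) : ℝ) : ℂ) = (1 - (x:ℂ)) ^ ((1/2:ℂ) - 1) := by
      rw [Complex.ofReal_cpow h1x]
      push_cast
      norm_num
    simp only [hf, hu_def, hv'_def]
    rw [this]
    simp only [hcdef]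
    ring
  have hIBP : ∫ x in a..b, f x
      = u b * v b - u a * v a - ∫ x in a..b, u' x * v x := by
    rw [intervalIntegral.integral_congr heq]
    exact intervalIntegral.integral_mul_deriv_eq_deriv_mul hu hv hu'int hv'int
  have hub : ‖u b * v b‖ ≤ T ^ (-(1/2):ℝ) := by
    rw [norm_mul]
    have h1 : ‖u b‖ = T ^ ((1/2):ℝ) := by
      rw [hu_def, Complex.norm_real, Real.norm_eq_abs, _root_.abs_of_nonneg (Real.rpow_nonneg (by linarith) _), R2]
    have h2 : ‖v b‖ ≤ T⁻¹ := by
      rw [hv_def, norm_div, Complex.norm_cpow_eq_rpow_re_of_pos (by linarith : (0:ℝ) < b), hc1re]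
      have hble : b ^ ((1/4):ℝ) ≤ 1 := Real.rpow_le_one (by linarith) (by linarith) (by norm_num)
      calc b ^ ((1/4):ℝ) / ‖c+1‖ ≤ 1 / T := by
            apply div_le_div₀ (by norm_num) hble hT0 habs_s
        _ = T⁻¹ := one_div T
    calc ‖u b‖ * ‖v b‖ ≤ T ^ ((1/2):ℝ) * T⁻¹ := by
          rw [h1]; exact mul_le_mul_of_nonneg_left h2 (by positivity)
      _ = T ^ (-(1/2):ℝ) := R5
  have hua : ‖u a * v a‖ ≤ 2 * T ^ (-(1/2):ℝ) := by
    rw [norm_mul]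
    have h1 : ‖u a‖ ≤ 2 := by
      rw [hu_def, Complex.norm_real, Real.norm_eq_abs, _root_.abs_of_nonneg (Real.rpow_nonneg (by linarith) _)]
      exact rpow_neg_le_two (by linarith) (by norm_num) (by norm_num)
    have h2 : ‖v a‖ ≤ T⁻¹ := by
      rw [hv_def, norm_div, Complex.norm_cpow_eq_rpow_re_of_pos ha0, hc1re]
      have hale : a ^ ((1/4):ℝ) ≤ 1 := Real.rpow_le_one ha0.le (by linarith) (by norm_num)
      calc a ^ ((1/4):ℝ) / ‖c+1‖ ≤ 1 / T := by
            apply div_le_div₀ (by norm_num) hale hT0 habs_s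
        _ = T⁻¹ := one_div T
    calc ‖u a‖ * ‖v a‖ ≤ 2 * T⁻¹ := by
          apply mul_le_mul h1 h2 (norm_nonneg _) (by norm_num)
      _ ≤ 2 * T ^ (-(1/2):ℝ) := by linarith [R4]
  have hInt : ‖∫ x in a..b, u' x * v x‖ ≤ T ^ (-(1/2):ℝ) := by
    have hint : IntervalIntegrable (fun x : ℝ => (1-x) ^ (-(3/2):ℝ) / 2 * T⁻¹) volume a b := by
      apply ContinuousOn.intervalIntegrable
      apply ContinuousOn.mul _ continuousOn_const
      apply ContinuousOn.div_const
      apply ContinuousOn.rpow_const (continuousOn_const.sub continuousOn_id)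
      intro x hx
      obtain ⟨hx1, hx2⟩ := hmem x hx
      left
      have : 0 < T⁻¹ := by positivity
      intro h
      rw [Pi.sub_apply, sub_eq_zero] at h
      have hx1' : (1:ℝ) = x := by simpa using h
      linarith
    have h := intervalIntegral.norm_integral_le_abs_of_norm_le
      (f := fun x => u' x * v x) (g := fun x : ℝ => (1-x) ^ (-(3/2):ℝ) / 2 * T⁻¹)
      (a := a) (b := b) ?_ hint
    · have hval : ∫ x in a..b, (1-x) ^ (-(3/2):ℝ) / 2 * T⁻¹
          = ((1-b) ^ (-(1/2):ℝ) - (1-a) ^ (-(1/2):ℝ)) * T⁻¹ := by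
        rw [intervalIntegral.integral_mul_const, intervalIntegral.integral_div,
          intervalIntegral.integral_comp_sub_left (fun x : ℝ => x ^ (-(3/2):ℝ)) 1]
        have hnot : (0:ℝ) ∉ uIcc (1-b) (1-a) := by
          rw [uIcc_of_le (by linarith : 1-b ≤ 1-a)]
          intro hmem0
          have h00 := hmem0.1
          rw [h1b] at h00
          have h0T : (0:ℝ) < T⁻¹ := by positivity
          linarith
        rw [integral_rpow (Or.inr ⟨by norm_num, hnot⟩)]
        rw [show (-(3/2):ℝ)+1 = -(1/2) by norm_num]
        ring
      rw [hval] at h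
      refine h.trans ?_
      have h1a2 : (0:ℝ) ≤ (1-a) ^ (-(1/2):ℝ) := Real.rpow_nonneg (by linarith) _
      have : |((1-b) ^ (-(1/2):ℝ) - (1-a) ^ (-(1/2):ℝ)) * T⁻¹|
          ≤ (1-b) ^ (-(1/2):ℝ) * T⁻¹ := by
        rw [abs_mul, _root_.abs_of_nonneg (by positivity : (0:ℝ) ≤ T⁻¹)]
        apply mul_le_mul_of_nonneg_right _ (by positivity)
        rw [abs_sub_le_iff]
        have hmono : (1-a) ^ (-(1/2):ℝ) ≤ (1-b) ^ (-(1/2):ℝ) :=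
          Real.rpow_le_rpow_of_nonpos (by rw [h1b]; positivity) (by linarith) (by norm_num)
        have hXnn : (0:ℝ) ≤ (1-b) ^ (-(1/2):ℝ) := Real.rpow_nonneg (by linarith) _
        constructor
        · linarith [h1a2]
        · linarith [hmono]
      refine this.trans ?_
      rw [R2, R5]
    · rw [ae_restrict_iff' measurableSet_uIoc]
      refine Filter.Eventually.of_forall (fun x hx => ?_)
      rw [uIoc_of_le hab] at hx
      obtain ⟨hx1, hx2⟩ := hx
      have h1x : 0 < 1 - x := by
        have h0T : (0:ℝ) < T⁻¹ := by positivity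
        linarith [h1b ▸ h0T]
      rw [norm_mul, hu'_def, hv_def, Complex.norm_real, Real.norm_eq_abs,
        _root_.abs_of_nonneg (by positivity : (0:ℝ) ≤ (1-x) ^ (-(3/2):ℝ) / 2),
        norm_div, Complex.norm_cpow_eq_rpow_re_of_pos (by linarith [ha0] : (0:ℝ) < x), hc1re]
      have hxle : x ^ ((1/4):ℝ) ≤ 1 :=
        Real.rpow_le_one (by linarith [ha0]) (by linarith) (by norm_num)
      apply mul_le_mul_of_nonneg_left _ (by positivity)
      calc x ^ ((1/4):ℝ) / ‖c+1‖ ≤ 1 / T := div_le_div₀ (by norm_num) hxle hT0 habs_s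
        _ = T⁻¹ := one_div T
  have P2 : ‖∫ x in a..b, f x‖ ≤ 4 * T ^ (-(1/2):ℝ) := by
    rw [hIBP]
    calc ‖u b * v b - u a * v a - ∫ x in a..b, u' x * v x‖
        ≤ ‖u b * v b - u a * v a‖ + ‖∫ x in a..b, u' x * v x‖ := norm_sub_le _ _
      _ ≤ ‖u b * v b‖ + ‖u a * v a‖ + ‖∫ x in a..b, u' x * v x‖ := by
          linarith [norm_sub_le (u b * v b) (u a * v a)]
      _ ≤ T ^ (-(1/2):ℝ) + 2 * T ^ (-(1/2):ℝ) + T ^ (-(1/2):ℝ) := by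
          have h1 : ‖u b * v b‖ = ‖u b * v b‖ := rfl
          have h2 : ‖u a * v a‖ = ‖u a * v a‖ := rfl
          rw [h1, h2]
          linarith [hub, hua, hInt]
      _ = 4 * T ^ (-(1/2):ℝ) := by ring
  -- combine
  rw [hsplit]
  calc ‖(∫ x in (0:ℝ)..a, f x) + (∫ x in a..b, f x) + (∫ x in b..1, f x)‖
      ≤ ‖∫ x in (0:ℝ)..a, f x‖ + ‖∫ x in a..b, f x‖ + ‖∫ x in b..1, f x‖ := by
        refine (norm_add_le _ _).trans ?_
        linarith [norm_add_le (∫ x in (0:ℝ)..a, f x) (∫ x in a..b, f x)]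
    _ ≤ 8 * T ^ (-(1/2):ℝ) + 4 * T ^ (-(1/2):ℝ) + 4 * T ^ (-(1/2):ℝ) := by
        linarith [P1, P2, P3]
    _ = 16 * T ^ (-(1/2):ℝ) := by ring

lemma identity12 (t : ℝ) :
    ‖Complex.Gamma (1 / 4 + (t / 2 : ℝ) * Complex.I)‖ ^ 4 /
        ‖Complex.Gamma (1 / 2 + (t : ℝ) * Complex.I)‖ ^ 2
      = 2 * ‖Complex.betaIntegral (1 / 4 + (t / 2 : ℝ) * Complex.I) (1/2)‖ ^ 2 := by
  set s : ℂ := 1 / 4 + (t / 2 : ℝ) * Complex.I with hs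
  have hre : s.re = 1/4 := by simp [hs]
  have h2s : (1 / 2 : ℂ) + (t : ℝ) * Complex.I = 2 * s := by rw [hs]; push_cast; ring
  have hdup := Complex.Gamma_mul_Gamma_add_half s
  have hbeta := Complex.Gamma_mul_Gamma_eq_betaIntegral
    (show 0 < s.re by rw [hre]; norm_num) (show 0 < (1/2 : ℂ).re by norm_num)
  set A1 := ‖Complex.Gamma s‖ with hA1
  set A2 := ‖Complex.Gamma (s + 1/2)‖ with hA2
  set A := ‖Complex.Gamma (2 * s)‖ with hA
  set Bb := ‖Complex.betaIntegral s (1/2)‖ with hBb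
  set c2 : ℝ := (2:ℝ) ^ ((1/2 : ℝ)) with hc2
  have sq2 : c2 ^ 2 = 2 := by
    rw [hc2, ← Real.rpow_natCast ((2:ℝ) ^ ((1/2:ℝ))) 2, ← Real.rpow_mul (by norm_num)]
    norm_num
  set cπ : ℝ := Real.sqrt π with hcπ
  have sqπ : cπ ^ 2 = π := Real.sq_sqrt pi_pos.le
  have habs2 : ‖(2:ℂ) ^ (1 - 2*s)‖ = c2 := by
    rw [show (2:ℂ) = ((2:ℝ):ℂ) by norm_num, Complex.norm_cpow_eq_rpow_re_of_pos (by norm_num)]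
    congr 1
    simp [hs]
    norm_num
  have E1 : A1 * A2 = A * c2 * cπ := by
    rw [hA1, hA2, hA, ← norm_mul, hdup, norm_mul, norm_mul, habs2, Complex.norm_real, Real.norm_eq_abs,
      _root_.abs_of_nonneg (Real.sqrt_nonneg _)]
  have habsπ : ‖Complex.Gamma (1/2)‖ = cπ := by
    rw [Complex.Gamma_one_half_eq, Complex.norm_cpow_eq_rpow_re_of_pos pi_pos]
    rw [hcπ, Real.sqrt_eq_rpow]
    norm_num
  have E2 : A1 * cπ = A2 * Bb := by
    rw [hA1, hA2, hBb, ← habsπ, ← norm_mul, hbeta, norm_mul]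
  have hπ : (0:ℝ) < π := pi_pos
  have hA2pos : 0 < A2 := norm_pos_iff.mpr (Complex.Gamma_ne_zero_of_re_pos (by simp [hs]; norm_num))
  have hApos : 0 < A := norm_pos_iff.mpr (Complex.Gamma_ne_zero_of_re_pos (by simp [hs]))
  have e1' : A1^2 * A2^2 = A^2 * (2*π) := by
    linear_combination (A1*A2 + A*c2*cπ) * E1 + A^2*cπ^2*sq2 + A^2*2*sqπ
  have e2' : A1^2 * π = A2^2 * Bb^2 := by
    linear_combination (A1*cπ + A2*Bb) * E2 - A1^2*sqπ
  rw [h2s]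
  rw [← hA]
  have key : A1^4 * π^2 = 2*Bb^2*A^2 * π^2 := by
    linear_combination (A1^2*π)*e2' + (Bb^2*π)*e1'
  have key2 : A1^4 = 2*Bb^2*A^2 := by
    have := mul_right_cancel₀ (pow_ne_zero 2 hπ.ne') key
    linarith
  rw [div_eq_iff (by positivity)]
  linarith [key2]

/-- There is a constant `C > 0` such that for all real `t`,
`|Γ(1/4 + it/2)|⁴ / |Γ(1/2 + it)|² ≤ C / (1 + |t|)`. -/
theorem stmt12 :
    ∃ C > (0:ℝ), ∀ t : ℝ,
      ‖Complex.Gamma (1 / 4 + (t / 2 : ℝ) * Complex.I)‖ ^ 4 /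
          ‖Complex.Gamma (1 / 2 + (t : ℝ) * Complex.I)‖ ^ 2 ≤
        C / (1 + |t|) := by
  refine ⟨2000, by norm_num, fun t => ?_⟩
  rw [identity12 t]
  set Bb := ‖Complex.betaIntegral (1 / 4 + ((t/2 : ℝ):ℂ) * Complex.I) (1/2)‖ with hBb
  have hBnn : 0 ≤ Bb := norm_nonneg _
  have hτabs : |t/2| = |t|/2 := by rw [abs_div]; norm_num
  by_cases h : 4 ≤ |t|
  · have hτ2 : 2 ≤ |t/2| := by rw [hτabs]; linarith
    have hb := Kbound_large (τ := t/2) hτ2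
    rw [← hBb] at hb
    have habsτ : 0 < |t/2| := by linarith
    have h2 : (|t/2| ^ (-(1/2):ℝ))^2 = |t/2|⁻¹ := by
      rw [← Real.rpow_natCast (|t/2| ^ (-(1/2):ℝ)) 2, ← Real.rpow_mul habsτ.le]
      norm_num
      rw [Real.rpow_neg_one]
    have hXnn : 0 ≤ |t/2| ^ (-(1/2):ℝ) := Real.rpow_nonneg habsτ.le _
    have h1 : 2 * Bb^2 ≤ 512 * |t/2|⁻¹ := by nlinarith [hb, hBnn, hXnn, h2]
    have h3 : 512 * |t/2|⁻¹ = 1024 / |t| := by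
      rw [hτabs]
      have ht0 : (0:ℝ) < |t| := by linarith
      field_simp
      norm_num
    have h4 : 1024 / |t| ≤ 2000 / (1 + |t|) := by
      rw [div_le_div_iff₀ (by linarith) (by linarith)]
      nlinarith [h]
    linarith
  · push_neg at h
    have hb := Kbound_triv (t/2)
    rw [← hBb] at hb
    have h1 : 2 * Bb^2 ≤ 288 := by nlinarith [hb, hBnn]
    have h2 : (400:ℝ) ≤ 2000 / (1 + |t|) := by
      rw [le_div_iff₀ (by positivity)]
      nlinarith [abs_nonneg t, h]
    linarith
end
end
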